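/- For a > 0, let C_a = { f ∈ BV(I) : f > 0 and var(f) ≤ a · ess inf(f) }. Then C_a is a convex cone: if f, g ∈ C_a and s, t > 0 then s·f + t·g ∈ C_a; moreover C_a ∪ {0} is closed in BV(I) with respect to the BV norm ‖f‖_BV = var(f) + ‖f‖_∞. -/

import Mathlib

open MeasureTheory

noncomputable def var (f : ℝ → ℝ) (s : Set ℝ) : ℝ := (eVariationOn f s).toReal
noncomputable def einf (f : ℝ → ℝ) (s : Set ℝ) : ℝ := essInf f (volume.restrict s)
noncomputable def supNorm (f : ℝ → ℝ) (s : Set ℝ) : ℝ :=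
  essSup (fun x => |f x|) (volume.restrict s)

/-- The BV norm `‖f‖_BV = var f + ‖f‖_∞` on the interval `I`. -/
noncomputable def bvNorm (f : ℝ → ℝ) (s : Set ℝ) : ℝ := var f s + supNorm f s

/-- The cone `C_a = { f ∈ BV : f > 0 (a.e.), var f ≤ a · essinf f }`. -/
def memC (a : ℝ) (I : Set ℝ) (f : ℝ → ℝ) : Prop :=
  BoundedVariationOn f I ∧ (∀ᵐ x ∂(volume.restrict I), 0 < f x) ∧ var f I ≤ a * einf f I

section Helpers

open Filter Set
open scoped ENNReal NNReal

private lemma evar_add_le (f g : ℝ → ℝ) (s : Set ℝ) :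
    eVariationOn (fun x => f x + g x) s ≤ eVariationOn f s + eVariationOn g s := by
  apply iSup_le
  rintro ⟨n, ⟨u, hu, us⟩⟩
  calc (∑ i ∈ Finset.range n,
        edist ((fun x => f x + g x) (u (i+1))) ((fun x => f x + g x) (u i)))
      ≤ ∑ i ∈ Finset.range n,
          (edist (f (u (i+1))) (f (u i)) + edist (g (u (i+1))) (g (u i))) :=
        Finset.sum_le_sum fun i _ => edist_add_add_le _ _ _ _
    _ = (∑ i ∈ Finset.range n, edist (f (u (i+1))) (f (u i)))
        + ∑ i ∈ Finset.range n, edist (g (u (i+1))) (g (u i)) := Finset.sum_add_distrib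
    _ ≤ _ := add_le_add (eVariationOn.sum_le (f := f) (n := n) hu us) (eVariationOn.sum_le (f := g) (n := n) hu us)

private lemma evar_smul_le (c : ℝ) (f : ℝ → ℝ) (s : Set ℝ) :
    eVariationOn (fun x => c * f x) s ≤ (‖c‖₊ : ℝ≥0∞) * eVariationOn f s := by
  apply iSup_le
  rintro ⟨n, ⟨u, hu, us⟩⟩
  calc (∑ i ∈ Finset.range n,
        edist ((fun x => c * f x) (u (i+1))) ((fun x => c * f x) (u i)))
      = ∑ i ∈ Finset.range n, (‖c‖₊ : ℝ≥0∞) * edist (f (u (i+1))) (f (u i)) := by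
        refine Finset.sum_congr rfl fun i _ => ?_
        simp only [← smul_eq_mul]
        rw [edist_smul₀]
        simp [ENNReal.smul_def]
    _ = (‖c‖₊ : ℝ≥0∞) * ∑ i ∈ Finset.range n, edist (f (u (i+1))) (f (u i)) := by
        rw [Finset.mul_sum]
    _ ≤ _ := mul_le_mul_right (eVariationOn.sum_le (f := f) (n := n) hu us) _

private lemma bv_smul' {f : ℝ → ℝ} {s : Set ℝ} (c : ℝ) (hf : BoundedVariationOn f s) :
    BoundedVariationOn (fun x => c * f x) s :=
  ne_top_of_le_ne_top (ENNReal.mul_ne_top ENNReal.coe_ne_top hf) (evar_smul_le c f s)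

private lemma bv_add' {f g : ℝ → ℝ} {s : Set ℝ} (hf : BoundedVariationOn f s)
    (hg : BoundedVariationOn g s) : BoundedVariationOn (fun x => f x + g x) s :=
  ne_top_of_le_ne_top (ENNReal.add_ne_top.2 ⟨hf, hg⟩) (evar_add_le f g s)

private lemma bv_sub' {f g : ℝ → ℝ} {s : Set ℝ} (hf : BoundedVariationOn f s)
    (hg : BoundedVariationOn g s) : BoundedVariationOn (fun x => f x - g x) s := by
  have h : (fun x => f x - g x) = fun x => f x + (-1 : ℝ) * g x := by funext x; ring
  rw [h]; exact bv_add' hf (bv_smul' _ hg)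

private lemma evar_neg (h : ℝ → ℝ) (s : Set ℝ) :
    eVariationOn (fun x => -h x) s = eVariationOn h s := by
  refine le_antisymm ?_ ?_
  · have := evar_smul_le (-1) h s
    simpa using this.trans_eq (by simp)
  · have h2 : eVariationOn h s = eVariationOn (fun x => (-1 : ℝ) * -h x) s :=
      eVariationOn.eq_of_eqOn fun x _ => by ring
    rw [h2]
    have := evar_smul_le (-1) (fun x => -h x) s
    simpa using this.trans_eq (by simp)

private lemma bv_bdd {A B : ℝ} (hAB : A ≤ B) {f : ℝ → ℝ}
    (hf : BoundedVariationOn f (Set.Icc A B)) :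
    ∃ M, ∀ x ∈ Set.Icc A B, |f x| ≤ M := by
  refine ⟨|f A| + (eVariationOn f (Set.Icc A B)).toReal, fun x hx => ?_⟩
  have h1 := hf.dist_le hx (Set.left_mem_Icc.2 hAB)
  rw [Real.dist_eq] at h1
  have h2 := abs_sub_abs_le_abs_sub (f x) (f A)
  linarith

private lemma mu_ne_zero {A B : ℝ} (hAB : A < B) : volume.restrict (Set.Icc A B) ≠ 0 := by
  intro h
  have h2 : volume.restrict (Set.Icc A B) Set.univ = 0 := by rw [h]; simp
  rw [Measure.restrict_apply_univ, Real.volume_Icc] at h2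
  simp only [ENNReal.ofReal_eq_zero] at h2
  linarith

private lemma le_einf' {μ : Measure ℝ} (hμ : μ ≠ 0) {f : ℝ → ℝ} {c : ℝ}
    (hb : Filter.IsBoundedUnder (· ≤ ·) (ae μ) f)
    (h : ∀ᵐ x ∂μ, c ≤ f x) : c ≤ essInf f μ := by
  haveI : (ae μ).NeBot := ae_neBot.2 hμ
  exact Filter.le_liminf_of_le hb.isCoboundedUnder_ge h

private lemma le_esssup' {μ : Measure ℝ} (hμ : μ ≠ 0) {f : ℝ → ℝ} {c : ℝ}
    (hb : Filter.IsBoundedUnder (· ≤ ·) (ae μ) f) (h : ∀ᵐ x ∂μ, c ≤ f x) :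
    c ≤ essSup f μ := by
  haveI : (ae μ).NeBot := ae_neBot.2 hμ
  exact Filter.le_limsup_of_frequently_le h.frequently hb

private lemma ae_bdd_le {A B : ℝ} {f : ℝ → ℝ} {M : ℝ} (hM : ∀ x ∈ Set.Icc A B, |f x| ≤ M) :
    Filter.IsBoundedUnder (· ≤ ·) (ae (volume.restrict (Set.Icc A B))) f := by
  refine ⟨M, ?_⟩
  rw [Filter.eventually_map]
  filter_upwards [ae_restrict_mem measurableSet_Icc] with x hx
  exact (abs_le.1 (hM x hx)).2

private lemma ae_bdd_ge {A B : ℝ} {f : ℝ → ℝ} {M : ℝ} (hM : ∀ x ∈ Set.Icc A B, |f x| ≤ M) :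
    Filter.IsBoundedUnder (· ≥ ·) (ae (volume.restrict (Set.Icc A B))) f := by
  refine ⟨-M, ?_⟩
  rw [Filter.eventually_map]
  filter_upwards [ae_restrict_mem measurableSet_Icc] with x hx
  exact (abs_le.1 (hM x hx)).1

private lemma ae_einf_le {A B : ℝ} (hAB : A ≤ B) {f : ℝ → ℝ}
    (hf : BoundedVariationOn f (Set.Icc A B)) :
    ∀ᵐ x ∂(volume.restrict (Set.Icc A B)),
      essInf f (volume.restrict (Set.Icc A B)) ≤ f x := by
  obtain ⟨M, hM⟩ := bv_bdd hAB hf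
  exact ae_essInf_le (ae_bdd_ge hM)

private lemma ae_le_esssup'' {A B : ℝ} (hAB : A ≤ B) {f : ℝ → ℝ}
    (hf : BoundedVariationOn f (Set.Icc A B)) :
    ∀ᵐ x ∂(volume.restrict (Set.Icc A B)),
      |f x| ≤ essSup (fun x => |f x|) (volume.restrict (Set.Icc A B)) := by
  obtain ⟨M, hM⟩ := bv_bdd hAB hf
  refine ae_le_essSup (f := fun x => |f x|) ⟨M, ?_⟩
  rw [Filter.eventually_map]
  filter_upwards [ae_restrict_mem measurableSet_Icc] with x hx
  exact hM x hx

private lemma var_le_add {f g : ℝ → ℝ} {s : Set ℝ} (hf : BoundedVariationOn f s)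
    (hg : BoundedVariationOn g s) :
    (eVariationOn f s).toReal
      ≤ (eVariationOn g s).toReal + (eVariationOn (fun x => f x - g x) s).toReal := by
  have h1 : BoundedVariationOn (fun x => f x - g x) s := bv_sub' hf hg
  have h2 : eVariationOn f s ≤ eVariationOn g s + eVariationOn (fun x => f x - g x) s := by
    have h3 : eVariationOn f s = eVariationOn (fun x => g x + (f x - g x)) s :=
      eVariationOn.eq_of_eqOn fun x _ => by ring
    rw [h3]
    exact evar_add_le g (fun x => f x - g x) s
  calc (eVariationOn f s).toReal
      ≤ (eVariationOn g s + eVariationOn (fun x => f x - g x) s).toReal :=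
        ENNReal.toReal_mono (ENNReal.add_ne_top.2 ⟨hg, h1⟩) h2
    _ = _ := ENNReal.toReal_add hg h1

private lemma einf_le_einf_add {A B : ℝ} (hAB : A ≤ B)
    (hμ : volume.restrict (Set.Icc A B) ≠ 0)
    {f g : ℝ → ℝ} (hf : BoundedVariationOn f (Set.Icc A B))
    (hg : BoundedVariationOn g (Set.Icc A B)) :
    essInf f (volume.restrict (Set.Icc A B)) ≤ essInf g (volume.restrict (Set.Icc A B))
      + essSup (fun x => |g x - f x|) (volume.restrict (Set.Icc A B)) := by
  set μ := volume.restrict (Set.Icc A B)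
  obtain ⟨M, hM⟩ := bv_bdd hAB hg
  have hS0 := ae_le_esssup'' hAB (bv_sub' hg hf)
  have key : ∀ᵐ x ∂μ,
      essInf f μ - essSup (fun x => |g x - f x|) μ ≤ g x := by
    filter_upwards [ae_einf_le hAB hf, hS0] with x h1 h2
    have h3 := (abs_le.1 h2).1
    linarith
  have := le_einf' hμ (ae_bdd_le hM) key
  linarith

private lemma supnorm_nonneg {A B : ℝ} (hAB : A ≤ B)
    (hμ : volume.restrict (Set.Icc A B) ≠ 0)
    {g : ℝ → ℝ} (hg : BoundedVariationOn g (Set.Icc A B)) :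
    0 ≤ essSup (fun x => |g x|) (volume.restrict (Set.Icc A B)) := by
  obtain ⟨M, hM⟩ := bv_bdd hAB hg
  refine le_esssup' hμ ⟨M, ?_⟩ (Filter.Eventually.of_forall fun x => abs_nonneg _)
  rw [Filter.eventually_map]
  filter_upwards [ae_restrict_mem measurableSet_Icc] with x hx
  calc |g x| ≤ M := hM x hx

private lemma einf_zero_measure {f : ℝ → ℝ} : essInf f (0 : Measure ℝ) = 0 := by
  rw [essInf_eq_sSup]
  have h : { a : ℝ | (0 : Measure ℝ) { x | f x < a } = 0 } = Set.univ := by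
    ext a; simp
  rw [h]
  exact Real.sSup_univ

end Helpers

/-- For `a > 0`, `C_a` is a convex cone: it is closed under addition and
positive scalar combinations; moreover `C_a ∪ {0}` is (sequentially) closed in the BV
norm `‖f‖_BV = var f + ‖f‖_∞`. -/
theorem stmt4 (A B : ℝ) (hAB : A ≤ B) (a : ℝ) (ha : 0 < a) :
    (∀ f g : ℝ → ℝ, ∀ s t : ℝ, 0 < s → 0 < t →
      memC a (Set.Icc A B) f → memC a (Set.Icc A B) g →
      memC a (Set.Icc A B) (fun x => s * f x + t * g x)) ∧
    (∀ (F : ℕ → ℝ → ℝ) (f : ℝ → ℝ),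
      (∀ n, memC a (Set.Icc A B) (F n) ∨ F n = 0) →
      BoundedVariationOn f (Set.Icc A B) →
      Filter.Tendsto (fun n => bvNorm (fun x => F n x - f x) (Set.Icc A B))
        Filter.atTop (nhds 0) →
      memC a (Set.Icc A B) f ∨ (∀ᵐ x ∂(volume.restrict (Set.Icc A B)), f x = 0)) := by
  constructor
  · -- Part 1: convex cone
    intro f g s t hs ht hf hg
    obtain ⟨hfBV, hfpos, hfv⟩ := hf
    obtain ⟨hgBV, hgpos, hgv⟩ := hg
    have hBV : BoundedVariationOn (fun x => s * f x + t * g x) (Set.Icc A B) :=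
      bv_add' (bv_smul' s hfBV) (bv_smul' t hgBV)
    refine ⟨hBV, ?_, ?_⟩
    · filter_upwards [hfpos, hgpos] with x h1 h2
      have := mul_pos hs h1
      have := mul_pos ht h2
      linarith
    · rcases eq_or_lt_of_le hAB with hEq | hlt
      · subst hEq
        have hIcc : Set.Icc A A = {A} := Set.Icc_self A
        have hvar : var (fun x => s * f x + t * g x) (Set.Icc A A) = 0 := by
          unfold var
          rw [eVariationOn.subsingleton]
          · simp
          · rw [hIcc]; exact Set.subsingleton_singleton
        have hmu0 : volume.restrict (Set.Icc A A) = 0 := by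
          rw [Measure.restrict_eq_zero, hIcc]
          exact Real.volume_singleton
        rw [hvar]
        unfold einf
        rw [hmu0, einf_zero_measure, mul_zero]
      · have hmu : volume.restrict (Set.Icc A B) ≠ 0 := mu_ne_zero hlt
        obtain ⟨Mf, hMf⟩ := bv_bdd hAB hfBV
        obtain ⟨Mg, hMg⟩ := bv_bdd hAB hgBV
        -- essInf superadditivity
        have hcomb_bdd : ∀ x ∈ Set.Icc A B, |s * f x + t * g x| ≤ s * Mf + t * Mg := by
          intro x hx
          calc |s * f x + t * g x| ≤ |s * f x| + |t * g x| := abs_add_le _ _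
            _ = s * |f x| + t * |g x| := by
                rw [abs_mul, abs_mul, abs_of_pos hs, abs_of_pos ht]
            _ ≤ s * Mf + t * Mg := by
                have := hMf x hx; have := hMg x hx
                have h1 := mul_le_mul_of_nonneg_left (hMf x hx) hs.le
                have h2 := mul_le_mul_of_nonneg_left (hMg x hx) ht.le
                linarith
        have h2 : s * einf f (Set.Icc A B) + t * einf g (Set.Icc A B)
            ≤ einf (fun x => s * f x + t * g x) (Set.Icc A B) := by
          refine le_einf' hmu (ae_bdd_le hcomb_bdd) ?_
          filter_upwards [ae_einf_le hAB hfBV, ae_einf_le hAB hgBV] with x h1 h2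
          have h3 := mul_le_mul_of_nonneg_left h1 hs.le
          have h4 := mul_le_mul_of_nonneg_left h2 ht.le
          unfold einf
          linarith
        -- variation subadditivity
        have hvar_le : var (fun x => s * f x + t * g x) (Set.Icc A B)
            ≤ s * var f (Set.Icc A B) + t * var g (Set.Icc A B) := by
          have e1 : eVariationOn (fun x => s * f x + t * g x) (Set.Icc A B)
              ≤ eVariationOn (fun x => s * f x) (Set.Icc A B)
                + eVariationOn (fun x => t * g x) (Set.Icc A B) :=
            evar_add_le (fun x => s * f x) (fun x => t * g x) (Set.Icc A B)
          have e2 := evar_smul_le s f (Set.Icc A B)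
          have e3 := evar_smul_le t g (Set.Icc A B)
          have hne : (‖s‖₊ : ENNReal) * eVariationOn f (Set.Icc A B)
              + (‖t‖₊ : ENNReal) * eVariationOn g (Set.Icc A B) ≠ ⊤ :=
            ENNReal.add_ne_top.2 ⟨ENNReal.mul_ne_top ENNReal.coe_ne_top hfBV,
              ENNReal.mul_ne_top ENNReal.coe_ne_top hgBV⟩
          calc var (fun x => s * f x + t * g x) (Set.Icc A B)
              ≤ ((‖s‖₊ : ENNReal) * eVariationOn f (Set.Icc A B)
                + (‖t‖₊ : ENNReal) * eVariationOn g (Set.Icc A B)).toReal :=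
                ENNReal.toReal_mono hne (e1.trans (add_le_add e2 e3))
            _ = s * var f (Set.Icc A B) + t * var g (Set.Icc A B) := by
                rw [ENNReal.toReal_add (ENNReal.mul_ne_top ENNReal.coe_ne_top hfBV)
                  (ENNReal.mul_ne_top ENNReal.coe_ne_top hgBV),
                  ENNReal.toReal_mul, ENNReal.toReal_mul]
                unfold var
                simp [Real.norm_eq_abs, abs_of_pos hs, abs_of_pos ht]
        have t1 : s * var f (Set.Icc A B) ≤ s * (a * einf f (Set.Icc A B)) :=
          mul_le_mul_of_nonneg_left hfv hs.le
        have t2 : t * var g (Set.Icc A B) ≤ t * (a * einf g (Set.Icc A B)) :=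
          mul_le_mul_of_nonneg_left hgv ht.le
        have t3 : a * (s * einf f (Set.Icc A B) + t * einf g (Set.Icc A B))
            ≤ a * einf (fun x => s * f x + t * g x) (Set.Icc A B) :=
          mul_le_mul_of_nonneg_left h2 ha.le
        have t4 : s * (a * einf f (Set.Icc A B)) + t * (a * einf g (Set.Icc A B))
            = a * (s * einf f (Set.Icc A B) + t * einf g (Set.Icc A B)) := by ring
        linarith
  · -- Part 2: closedness
    intro F f hmem hfBV htend
    rcases eq_or_lt_of_le hAB with hEq | hlt
    · right
      subst hEq
      have hmu0 : volume.restrict (Set.Icc A A) = 0 := by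
        rw [Measure.restrict_eq_zero, Set.Icc_self]
        exact Real.volume_singleton
      rw [hmu0]
      simp
    · have hmu : volume.restrict (Set.Icc A B) ≠ 0 := mu_ne_zero hlt
      have hFBV : ∀ n, BoundedVariationOn (F n) (Set.Icc A B) := by
        intro n
        rcases hmem n with h | h
        · exact h.1
        · have h0 : (0 : ℝ → ℝ) = fun x => (0 : ℝ) * f x := by funext x; simp
          rw [h, h0]
          exact bv_smul' 0 hfBV
      have hGBV : ∀ n, BoundedVariationOn (fun x => F n x - f x) (Set.Icc A B) :=
        fun n => bv_sub' (hFBV n) hfBV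
      have hbv0 : ∀ n, 0 ≤ var (fun x => F n x - f x) (Set.Icc A B) :=
        fun n => ENNReal.toReal_nonneg
      have hsn0 : ∀ n, 0 ≤ supNorm (fun x => F n x - f x) (Set.Icc A B) :=
        fun n => supnorm_nonneg hAB hmu (hGBV n)
      have hV : Filter.Tendsto (fun n => var (fun x => F n x - f x) (Set.Icc A B))
          Filter.atTop (nhds 0) := by
        refine squeeze_zero hbv0 (fun n => ?_) htend
        unfold bvNorm
        linarith [hsn0 n]
      have hS : Filter.Tendsto (fun n => supNorm (fun x => F n x - f x) (Set.Icc A B))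
          Filter.atTop (nhds 0) := by
        refine squeeze_zero hsn0 (fun n => ?_) htend
        unfold bvNorm
        linarith [hbv0 n]
      by_cases hfreq : ∃ᶠ n in Filter.atTop, F n = 0
      · right
        have hBV0f : BoundedVariationOn (fun x => (0 : ℝ) - f x) (Set.Icc A B) := by
          have h0 : (fun x => (0 : ℝ) - f x) = fun x => (-1 : ℝ) * f x := by funext x; ring
          rw [h0]
          exact bv_smul' _ hfBV
        have hc : bvNorm (fun x => (0 : ℝ) - f x) (Set.Icc A B) ≤ 0 := by
          by_contra hpos
          push_neg at hpos
          have hev := htend.eventually_lt_const hpos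
          obtain ⟨n, hn0, hnlt⟩ := (hfreq.and_eventually hev).exists
          rw [hn0] at hnlt
          simp only [Pi.zero_apply] at hnlt
          exact lt_irrefl _ hnlt
        have hsup0 : supNorm (fun x => (0 : ℝ) - f x) (Set.Icc A B) = 0 := by
          refine le_antisymm ?_ (supnorm_nonneg hAB hmu hBV0f)
          unfold bvNorm at hc
          have := ENNReal.toReal_nonneg (a := eVariationOn (fun x => (0 : ℝ) - f x) (Set.Icc A B))
          unfold var at hc
          linarith
        have h1 := ae_le_esssup'' hAB hBV0f
        rw [show essSup (fun x => |(fun x => (0 : ℝ) - f x) x|)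
            (volume.restrict (Set.Icc A B))
          = supNorm (fun x => (0 : ℝ) - f x) (Set.Icc A B) from rfl, hsup0] at h1
        filter_upwards [h1] with x hx
        have h2 : |0 - f x| ≤ 0 := hx
        have h3 := abs_nonneg (0 - f x)
        have h4 : |0 - f x| = 0 := le_antisymm h2 h3
        have := abs_eq_zero.1 h4
        linarith
      · have hev : ∀ᶠ n in Filter.atTop, memC a (Set.Icc A B) (F n) := by
          filter_upwards [Filter.not_frequently.mp hfreq] with n hn
          rcases hmem n with h | h
          · exact h
          · exact absurd h hn
        -- var (F n) → var f
        have hvarconv : Filter.Tendsto (fun n => var (F n) (Set.Icc A B))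
            Filter.atTop (nhds (var f (Set.Icc A B))) := by
          have hd : Filter.Tendsto
              (fun n => var (F n) (Set.Icc A B) - var f (Set.Icc A B))
              Filter.atTop (nhds 0) := by
            refine squeeze_zero_norm (fun n => ?_) hV
            rw [Real.norm_eq_abs, abs_sub_le_iff]
            constructor
            · have := var_le_add (hFBV n) hfBV
              unfold var
              linarith
            · have h5 := var_le_add hfBV (hFBV n)
              have h6 : eVariationOn (fun x => f x - F n x) (Set.Icc A B)
                  = eVariationOn (fun x => F n x - f x) (Set.Icc A B) := by
                rw [show (fun x => f x - F n x) = fun x => -(F n x - f x) by funext x; ring]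
                exact evar_neg _ _
              rw [h6] at h5
              unfold var
              linarith
          have := hd.add_const (var f (Set.Icc A B))
          simpa using this
        -- einf (F n) → einf f
        have heinfconv : Filter.Tendsto (fun n => einf (F n) (Set.Icc A B))
            Filter.atTop (nhds (einf f (Set.Icc A B))) := by
          have hd : Filter.Tendsto
              (fun n => einf (F n) (Set.Icc A B) - einf f (Set.Icc A B))
              Filter.atTop (nhds 0) := by
            refine squeeze_zero_norm (fun n => ?_) hS
            rw [Real.norm_eq_abs, abs_sub_le_iff]
            have habs : (fun x => |f x - F n x|) = fun x => |F n x - f x| := by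
              funext x; exact abs_sub_comm _ _
            constructor
            · have h5 := einf_le_einf_add hAB hmu (hFBV n) hfBV
              rw [habs] at h5
              unfold einf supNorm
              linarith
            · have h5 := einf_le_einf_add hAB hmu hfBV (hFBV n)
              unfold einf supNorm
              linarith
          have := hd.add_const (einf f (Set.Icc A B))
          simpa using this
        have hle : var f (Set.Icc A B) ≤ a * einf f (Set.Icc A B) :=
          le_of_tendsto_of_tendsto hvarconv (heinfconv.const_mul a)
            (hev.mono fun n hn => hn.2.2)
        have heinf0 : 0 ≤ einf f (Set.Icc A B) := by
          refine le_of_tendsto_of_tendsto tendsto_const_nhds heinfconv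
            (hev.mono fun n hn => ?_)
          obtain ⟨M, hM⟩ := bv_bdd hAB (hFBV n)
          exact le_einf' hmu (ae_bdd_le hM) (hn.2.1.mono fun x hx => hx.le)
        by_cases hz : einf f (Set.Icc A B) = 0
        · right
          have hvar0 : var f (Set.Icc A B) = 0 := by
            rw [hz, mul_zero] at hle
            exact le_antisymm hle ENNReal.toReal_nonneg
          have hevar0 : eVariationOn f (Set.Icc A B) = 0 := by
            unfold var at hvar0
            rcases (ENNReal.toReal_eq_zero_iff _).1 hvar0 with h | h
            · exact h
            · exact absurd h hfBV
          have hconst : ∀ x ∈ Set.Icc A B, f x = f A := by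
            intro x hx
            have := (eVariationOn.eq_zero_iff f).1 hevar0 x hx A (Set.left_mem_Icc.2 hAB)
            exact edist_eq_zero.1 this
          have hfae : f =ᵐ[volume.restrict (Set.Icc A B)] fun _ => f A := by
            filter_upwards [ae_restrict_mem measurableSet_Icc] with x hx
            exact hconst x hx
          have heinfA : einf f (Set.Icc A B) = f A := by
            unfold einf
            rw [essInf_congr_ae hfae, essInf_const _ hmu]
          have hA0 : f A = 0 := by rw [← heinfA, hz]
          filter_upwards [ae_restrict_mem measurableSet_Icc] with x hx
          rw [hconst x hx, hA0]
        · left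
          have hpos : 0 < einf f (Set.Icc A B) := lt_of_le_of_ne heinf0 (Ne.symm hz)
          refine ⟨hfBV, ?_, hle⟩
          filter_upwards [ae_einf_le hAB hfBV] with x hx
          exact lt_of_lt_of_le hpos hx
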